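/- In the 1-dimensional Setup, suppose additionally that there exists θ ∈ [a,b] with θ > θ_SL and c(θ_SL, θ) = 1. Then there is a unique θ₀ ∈ (a,b] with Γ(θ₀) = 1/2; it satisfies θ₀ > θ_SL and c(θ_SL, θ₀) ≤ 1; and a point θ ∈ [a,b] is locally stable for L_0 (the case p = 0, in which all agents follow standard microfoundations) if and only if θ ∈ [θ₀, b]. In particular, locally stable points exist when p = 0. -/

import Mathlib

open MeasureTheory Set
open Topology Filter

/-- Best response of an agent with features `x` to the threshold classifier `1{· ≥ θ}`
under a cost function `c` with utility `γ = 1` for positive classification. -/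
noncomputable def bestResponse (c : ℝ → ℝ → ℝ) (θ x : ℝ) : ℝ :=
  if θ ≤ x then x else if c x θ ≤ 1 then θ else x

/-- Risk of the threshold `θ'` on the base (non-strategic) population. -/
noncomputable def nonStrategicRisk (β : Measure ℝ) (μ : ℝ → ℝ) (θ' : ℝ) : ℝ :=
  ∫ x, (if θ' ≤ x then 1 - μ x else μ x) ∂β

/-- Decoupled performative risk of the threshold `θ'` on the distribution induced by
deploying `θ` against agents following standard microfoundations. -/
noncomputable def smRisk (β : Measure ℝ) (μ : ℝ → ℝ) (c : ℝ → ℝ → ℝ) (θ θ' : ℝ) : ℝ :=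
  ∫ x, (if θ' ≤ bestResponse c θ x then 1 - μ x else μ x) ∂β

/-- Decoupled performative risk for a mixture of a `p` fraction of non-strategic agents
and a `1 - p` fraction of agents following standard microfoundations. -/
noncomputable def mixRisk (β : Measure ℝ) (μ : ℝ → ℝ) (c : ℝ → ℝ → ℝ) (p θ θ' : ℝ) : ℝ :=
  p * nonStrategicRisk β μ θ' + (1 - p) * smRisk β μ c θ θ'

/-- `θ` is locally (performatively) stable: it is a local minimum on `[a,b]` of the
decoupled performative risk `θ' ↦ L_p(θ, θ')`, or that map is differentiable at `θ`
with derivative `0`. -/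
def LocallyStable (β : Measure ℝ) (μ : ℝ → ℝ) (c : ℝ → ℝ → ℝ) (a b p θ : ℝ) : Prop :=
  IsLocalMinOn (fun θ' => mixRisk β μ c p θ θ') (Icc a b) θ ∨
    HasDerivAt (fun θ' => mixRisk β μ c p θ θ') 0 θ

/-- The set of agents who game to the threshold `θ`. -/
def Qset (c : ℝ → ℝ → ℝ) (a b θ : ℝ) : Set ℝ := {x | x ∈ Icc a b ∧ x < θ ∧ c x θ ≤ 1}

/-- Average of `μ` over the gaming set `Q(θ)`. -/
noncomputable def Gam (β : Measure ℝ) (μ : ℝ → ℝ) (c : ℝ → ℝ → ℝ) (a b θ : ℝ) : ℝ :=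
  (∫ x in Qset c a b θ, μ x ∂β) / (β (Qset c a b θ)).toReal


set_option linter.unusedSectionVars false

noncomputable def qfun (c : ℝ → ℝ → ℝ) (a θ : ℝ) : ℝ := sInf {x | x ∈ Icc a θ ∧ c x θ ≤ 1}

section qlem
variable {a : ℝ} {c : ℝ → ℝ → ℝ}
  (hc_cont : Continuous fun p : ℝ × ℝ => c p.1 p.2)
  (hc_zero : ∀ x, c x x = 0)
  (hc_between : ∀ x xP z : ℝ, min x xP < z → z < max x xP → c x z < c x xP ∧ c z x < c xP x)

include hc_cont hc_zero hc_between

lemma q_spec {θ : ℝ} (hθ : a ≤ θ) :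
    {x | x ∈ Icc a θ ∧ c x θ ≤ 1} = Icc (qfun c a θ) θ ∧ a ≤ qfun c a θ ∧
      qfun c a θ ≤ θ ∧ c (qfun c a θ) θ ≤ 1 := by
  set S := {x | x ∈ Icc a θ ∧ c x θ ≤ 1} with hS
  have hne : S.Nonempty := ⟨θ, ⟨⟨hθ, le_rfl⟩, by simp [hc_zero]⟩⟩
  have hbdd : BddBelow S := ⟨a, fun x hx => hx.1.1⟩
  have hclosed : IsClosed S := by
    have h1 : S = Icc a θ ∩ (fun x => c x θ) ⁻¹' Iic 1 := by
      ext x; simp [hS, mem_inter_iff, and_assoc]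
    rw [h1]
    exact isClosed_Icc.inter (IsClosed.preimage
      (hc_cont.comp (continuous_id.prodMk continuous_const)) isClosed_Iic)
  have hmem : qfun c a θ ∈ S := hclosed.csInf_mem hne hbdd
  have haq : a ≤ qfun c a θ := le_csInf hne fun x hx => hx.1.1
  have hqθ : qfun c a θ ≤ θ := hmem.1.2
  refine ⟨?_, haq, hqθ, hmem.2⟩
  apply Subset.antisymm
  · exact fun x hx => ⟨csInf_le hbdd hx, hx.1.2⟩
  · intro x hx
    refine ⟨⟨haq.trans hx.1, hx.2⟩, ?_⟩
    rcases eq_or_lt_of_le hx.2 with rfl | hxθ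
    · simp [hc_zero]
    rcases eq_or_lt_of_le hx.1 with h | hqx
    · rw [← h]; exact hmem.2
    have := (hc_between θ (qfun c a θ) x (by rw [min_eq_right hqθ]; exact hqx)
      (by rw [max_eq_left hqθ]; exact hxθ)).2
    exact this.le.trans hmem.2

lemma q_lt {θ : ℝ} (hθ : a < θ) : qfun c a θ < θ := by
  obtain ⟨hSeq, haq, hqθ, hcq⟩ := q_spec hc_cont hc_zero hc_between (le_of_lt hθ) (c := c)
  have hcont : Continuous fun x : ℝ => c x θ :=
    hc_cont.comp (continuous_id.prodMk continuous_const)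
  have hopen : IsOpen ((fun x : ℝ => c x θ) ⁻¹' Iio 1) := isOpen_Iio.preimage hcont
  have hθmem : θ ∈ (fun x : ℝ => c x θ) ⁻¹' Iio 1 := by simp [hc_zero]
  obtain ⟨δ, hδ0, hball⟩ := Metric.isOpen_iff.1 hopen θ hθmem
  set x := max ((a + θ)/2) (θ - δ/2) with hx
  have hxa : a ≤ x := le_trans (by linarith) (le_max_left _ _)
  have hxθ : x < θ := max_lt (by linarith) (by linarith)
  have hxball : x ∈ Metric.ball θ δ := by
    rw [Real.ball_eq_Ioo]
    constructor
    · exact lt_of_lt_of_le (by linarith) (le_max_right _ _)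
    · linarith
  have hxc : c x θ < 1 := hball hxball
  have : x ∈ {y | y ∈ Icc a θ ∧ c y θ ≤ 1} := ⟨⟨hxa, hxθ.le⟩, hxc.le⟩
  rw [hSeq] at this
  exact lt_of_le_of_lt this.1 hxθ

lemma q_mono {θ θ' : ℝ} (hθ : a ≤ θ) (hθθ' : θ ≤ θ') : qfun c a θ ≤ qfun c a θ' := by
  obtain ⟨hSeq, haq, hqθ, hcq⟩ := q_spec hc_cont hc_zero hc_between hθ (c := c)
  obtain ⟨hSeq', haq', hqθ', hcq'⟩ := q_spec hc_cont hc_zero hc_between (hθ.trans hθθ') (c := c)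
  rcases le_or_gt θ (qfun c a θ') with h | h
  · exact hqθ.trans h
  · rcases eq_or_lt_of_le hθθ' with rfl | hlt
    · exact le_rfl
    · have hc1 : c (qfun c a θ') θ < c (qfun c a θ') θ' :=
        (hc_between (qfun c a θ') θ' θ (by rw [min_eq_left (h.le.trans hθθ')]; exact h)
          (by rw [max_eq_right (h.le.trans hθθ')]; exact hlt)).1
      exact csInf_le ⟨a, fun x hx => hx.1.1⟩ ⟨⟨haq', h.le⟩, (hc1.le.trans hcq')⟩

lemma q_out {θ x : ℝ} (hθ : a ≤ θ) (hax : a ≤ x) (hxq : x < qfun c a θ) : 1 < c x θ := by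
  obtain ⟨hSeq, haq, hqθ, hcq⟩ := q_spec hc_cont hc_zero hc_between hθ (c := c)
  by_contra h
  push_neg at h
  have : x ∈ {y | y ∈ Icc a θ ∧ c y θ ≤ 1} := ⟨⟨hax, hxq.le.trans hqθ⟩, h⟩
  rw [hSeq] at this
  exact absurd this.1 (not_le.2 hxq)

lemma q_cont : ContinuousOn (qfun c a) (Ioi a) := by
  intro θ hθ
  rw [Metric.continuousWithinAt_iff]
  intro ε hε
  have hθa : a < θ := hθ
  obtain ⟨hSeq, haq, hqθle, hcq⟩ := q_spec hc_cont hc_zero hc_between hθa.le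
  have hqθ : qfun c a θ < θ := q_lt hc_cont hc_zero hc_between hθa
  set q := qfun c a θ with hqdef
  -- up witness
  set x₁ := q + min ε (θ - q) / 2 with hx₁
  have hminpos : 0 < min ε (θ - q) := lt_min hε (by linarith)
  have hqx₁ : q < x₁ := by rw [hx₁]; linarith
  have hx₁θ : x₁ < θ := by
    have : min ε (θ - q) ≤ θ - q := min_le_right _ _
    rw [hx₁]; linarith
  have hx₁ε : x₁ ≤ q + ε / 2 := by
    have : min ε (θ - q) ≤ ε := min_le_left _ _
    rw [hx₁]; linarith
  have hax₁ : a ≤ x₁ := haq.trans hqx₁.le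
  have hcx₁ : c x₁ θ < 1 := by
    have := (hc_between θ q x₁ (by rw [min_eq_right hqθle]; exact hqx₁)
      (by rw [max_eq_left hqθle]; exact hx₁θ)).2
    exact lt_of_lt_of_le this hcq
  have hcont₁ : Continuous fun t : ℝ => c x₁ t :=
    hc_cont.comp (continuous_const.prodMk continuous_id)
  obtain ⟨δ₁, hδ₁0, hball₁⟩ := Metric.isOpen_iff.1 (isOpen_Iio.preimage hcont₁) θ
    (by simpa using hcx₁)
  -- a lower bound helper for S θ'
  have hup : ∀ θ' : ℝ, a < θ' → dist θ' θ < min δ₁ (θ - x₁) → qfun c a θ' ≤ q + ε / 2 := by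
    intro θ' hθ' hd
    obtain ⟨hSeq', haq', hqθle', hcq'⟩ := q_spec hc_cont hc_zero hc_between hθ'.le
    have hd₁ : dist θ' θ < δ₁ := lt_of_lt_of_le hd (min_le_left _ _)
    have hd₂ : dist θ' θ < θ - x₁ := lt_of_lt_of_le hd (min_le_right _ _)
    have hx₁θ' : x₁ ≤ θ' := by
      rw [Real.dist_eq, abs_lt] at hd₂; linarith
    have hcx₁θ' : c x₁ θ' ≤ 1 := (hball₁ (by rwa [Metric.mem_ball])).le
    have hmem : x₁ ∈ {y | y ∈ Icc a θ' ∧ c y θ' ≤ 1} := ⟨⟨hax₁, hx₁θ'⟩, hcx₁θ'⟩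
    rw [hSeq'] at hmem
    exact hmem.1.trans hx₁ε
  -- down part
  rcases eq_or_lt_of_le haq with hqa | hqa
  · -- q = a
    refine ⟨min δ₁ (θ - x₁), lt_min hδ₁0 (by linarith), ?_⟩
    intro θ' hθ' hd
    obtain ⟨hSeq', haq', hqθle', hcq'⟩ := q_spec hc_cont hc_zero hc_between (le_of_lt hθ')
    have h1 := hup θ' hθ' hd
    rw [Real.dist_eq, abs_lt]
    constructor
    · have : q ≤ qfun c a θ' := by rw [← hqa]; exact haq'
      linarith
    · linarith
  · -- a < q
    set x₂ := q - min ε (q - a) / 2 with hx₂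
    have hmin2pos : 0 < min ε (q - a) := lt_min hε (by linarith)
    have hx₂q : x₂ < q := by rw [hx₂]; linarith
    have hax₂ : a < x₂ := by
      have : min ε (q - a) ≤ q - a := min_le_right _ _
      rw [hx₂]; linarith
    have hx₂ε : q - ε / 2 ≤ x₂ := by
      have : min ε (q - a) ≤ ε := min_le_left _ _
      rw [hx₂]; linarith
    have hcx₂ : 1 < c x₂ θ := by
      by_contra h
      push_neg at h
      have : x₂ ∈ {y | y ∈ Icc a θ ∧ c y θ ≤ 1} := ⟨⟨hax₂.le, hx₂q.le.trans hqθle⟩, h⟩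
      rw [hSeq] at this
      exact absurd this.1 (not_le.2 hx₂q)
    have hcont₂ : Continuous fun t : ℝ => c x₂ t :=
      hc_cont.comp (continuous_const.prodMk continuous_id)
    obtain ⟨δ₂, hδ₂0, hball₂⟩ := Metric.isOpen_iff.1 (isOpen_Ioi.preimage hcont₂) θ
      (by simpa using hcx₂)
    refine ⟨min (min δ₁ (θ - x₁)) (min δ₂ (θ - x₂)), lt_min (lt_min hδ₁0 (by linarith))
      (lt_min hδ₂0 (by linarith)), ?_⟩
    intro θ' hθ' hd
    have hdu : dist θ' θ < min δ₁ (θ - x₁) := lt_of_lt_of_le hd (min_le_left _ _)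
    have hdd : dist θ' θ < min δ₂ (θ - x₂) := lt_of_lt_of_le hd (min_le_right _ _)
    have h1 := hup θ' hθ' hdu
    obtain ⟨hSeq', haq', hqθle', hcq'⟩ := q_spec hc_cont hc_zero hc_between (le_of_lt hθ')
    -- x₂ < qfun c a θ'
    have hd₂ : dist θ' θ < δ₂ := lt_of_lt_of_le hdd (min_le_left _ _)
    have hd₃ : dist θ' θ < θ - x₂ := lt_of_lt_of_le hdd (min_le_right _ _)
    have hx₂θ' : x₂ ≤ θ' := by rw [Real.dist_eq, abs_lt] at hd₃; linarith
    have hcx₂θ' : 1 < c x₂ θ' := hball₂ (by rwa [Metric.mem_ball])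
    have hlow : x₂ < qfun c a θ' := by
      by_contra h
      push_neg at h
      have : x₂ ∈ Icc (qfun c a θ') θ' := ⟨h, hx₂θ'⟩
      rw [← hSeq'] at this
      exact absurd this.2 (not_le.2 hcx₂θ')
    rw [Real.dist_eq, abs_lt]
    have h2 : q - ε / 2 < qfun c a θ' := lt_of_le_of_lt hx₂ε hlow
    constructor
    · linarith
    · linarith

end qlem


section meas
variable {a b : ℝ} {g μ : ℝ → ℝ} {β : Measure ℝ} {dg : ℝ}

lemma bm_apply (hβ : β = (volume.restrict (Icc a b)).withDensity fun x => ENNReal.ofReal (g x))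
    {s : Set ℝ} (hs : MeasurableSet s) :
    β s = ∫⁻ x in s, ENNReal.ofReal (g x) ∂(volume.restrict (Icc a b)) := by
  rw [hβ]; exact withDensity_apply _ hs

lemma ae_Icc (hβ : β = (volume.restrict (Icc a b)).withDensity fun x => ENNReal.ofReal (g x)) :
    ∀ᵐ x ∂β, x ∈ Icc a b := by
  rw [ae_iff]
  have h1 : {x | ¬ x ∈ Icc a b} = (Icc a b)ᶜ := rfl
  rw [h1, bm_apply hβ measurableSet_Icc.compl]
  apply setLIntegral_measure_zero
  rw [Measure.restrict_apply measurableSet_Icc.compl]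
  simp

lemma mass_ub {Mg u v : ℝ} (hβ : β = (volume.restrict (Icc a b)).withDensity fun x => ENNReal.ofReal (g x))
    (hMg0 : 0 ≤ Mg) (hMg : ∀ x ∈ Icc a b, g x ≤ Mg) (hu : a ≤ u) (huv : u ≤ v) (hv : v ≤ b) :
    (β (Ico u v)).toReal ≤ Mg * (v - u) := by
  have hsub : Ico u v ⊆ Icc a b := fun x hx => ⟨hu.trans hx.1, hx.2.le.trans hv⟩
  have h2 : (volume.restrict (Icc a b)).restrict (Ico u v) = volume.restrict (Ico u v) := by
    rw [Measure.restrict_restrict measurableSet_Ico, inter_eq_self_of_subset_left hsub]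
  have h5 : β (Ico u v) ≤ ENNReal.ofReal (Mg * (v - u)) := by
    rw [bm_apply hβ measurableSet_Ico]
    calc ∫⁻ x in Ico u v, ENNReal.ofReal (g x) ∂(volume.restrict (Icc a b))
        = ∫⁻ x, ENNReal.ofReal (g x) ∂(volume.restrict (Ico u v)) := by rw [h2]
      _ ≤ ∫⁻ _x, ENNReal.ofReal Mg ∂(volume.restrict (Ico u v)) := by
          apply lintegral_mono_ae
          filter_upwards [ae_restrict_mem measurableSet_Ico] with x hx
          exact ENNReal.ofReal_le_ofReal (hMg x (hsub hx))
      _ = ENNReal.ofReal Mg * volume (Ico u v) := by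
          rw [lintegral_const, Measure.restrict_apply_univ]
      _ = ENNReal.ofReal (Mg * (v - u)) := by
          rw [Real.volume_Ico, ← ENNReal.ofReal_mul hMg0]
  calc (β (Ico u v)).toReal ≤ (ENNReal.ofReal (Mg * (v - u))).toReal :=
        ENNReal.toReal_mono ENNReal.ofReal_ne_top h5
    _ ≤ Mg * (v - u) := by
        rw [ENNReal.toReal_ofReal (mul_nonneg hMg0 (by linarith))]
  -- careful: v - u ≥ 0 needed

lemma mass_lb {dg u v : ℝ} (hβ : β = (volume.restrict (Icc a b)).withDensity fun x => ENNReal.ofReal (g x))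
    [IsFiniteMeasure β]
    (hdg : ∀ x ∈ Icc a b, dg ≤ g x) (hu : a ≤ u) (huv : u ≤ v) (hv : v ≤ b) :
    dg * (v - u) ≤ (β (Ico u v)).toReal := by
  rcases le_or_gt dg 0 with hdg0 | hdg0
  · exact le_trans (mul_nonpos_of_nonpos_of_nonneg hdg0 (by linarith)) ENNReal.toReal_nonneg
  have hsub : Ico u v ⊆ Icc a b := fun x hx => ⟨hu.trans hx.1, hx.2.le.trans hv⟩
  have h2 : (volume.restrict (Icc a b)).restrict (Ico u v) = volume.restrict (Ico u v) := by
    rw [Measure.restrict_restrict measurableSet_Ico, inter_eq_self_of_subset_left hsub]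
  have h5 : ENNReal.ofReal (dg * (v - u)) ≤ β (Ico u v) := by
    rw [bm_apply hβ measurableSet_Ico]
    calc ENNReal.ofReal (dg * (v - u)) = ENNReal.ofReal dg * volume (Ico u v) := by
          rw [Real.volume_Ico, ← ENNReal.ofReal_mul hdg0.le]
      _ = ∫⁻ _x, ENNReal.ofReal dg ∂(volume.restrict (Ico u v)) := by
          rw [lintegral_const, Measure.restrict_apply_univ]
      _ ≤ ∫⁻ x, ENNReal.ofReal (g x) ∂(volume.restrict (Ico u v)) := by
          apply lintegral_mono_ae
          filter_upwards [ae_restrict_mem measurableSet_Ico] with x hx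
          exact ENNReal.ofReal_le_ofReal (hdg x (hsub hx))
      _ = ∫⁻ x in Ico u v, ENNReal.ofReal (g x) ∂(volume.restrict (Icc a b)) := by rw [h2]
  have := ENNReal.toReal_mono (measure_ne_top β _) h5
  rwa [ENNReal.toReal_ofReal (mul_nonneg hdg0.le (by linarith))] at this




lemma aesm_of_contOn (hβ : β = (volume.restrict (Icc a b)).withDensity fun x => ENNReal.ofReal (g x))
    {f : ℝ → ℝ} (hf : ContinuousOn f (Icc a b)) : AEStronglyMeasurable f β := by
  have h1 : AEMeasurable f (volume.restrict (Icc a b)) := hf.aemeasurable measurableSet_Icc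
  have h2 : β ≪ volume.restrict (Icc a b) := by
    rw [hβ]; exact withDensity_absolutelyContinuous _ _
  exact (h1.mono_ac h2).aestronglyMeasurable

lemma integrable_bdd (hβ : β = (volume.restrict (Icc a b)).withDensity fun x => ENNReal.ofReal (g x))
    [IsFiniteMeasure β] {f : ℝ → ℝ} (hmeas : AEStronglyMeasurable f β)
    (hbd : ∀ x ∈ Icc a b, |f x| ≤ 1) : Integrable f β := by
  refine (integrable_const (1:ℝ)).mono' hmeas ?_
  filter_upwards [ae_Icc hβ] with x hx
  simpa using hbd x hx

-- upper bound for set integrals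
lemma setint_ub (hβ : β = (volume.restrict (Icc a b)).withDensity fun x => ENNReal.ofReal (g x))
    [IsFiniteMeasure β] {f : ℝ → ℝ} {C : ℝ} {s : Set ℝ} (hs : MeasurableSet s)
    (hint : Integrable f β) (hbd : ∀ x ∈ s ∩ Icc a b, f x ≤ C) :
    ∫ x in s, f x ∂β ≤ C * (β s).toReal := by
  have h1 : ∫ x in s, f x ∂β ≤ ∫ _x in s, C ∂β := by
    apply integral_mono_ae hint.restrict (integrable_const C)
    filter_upwards [ae_restrict_mem hs, ae_restrict_of_ae (ae_Icc hβ)] with x h1 h2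
    exact hbd x ⟨h1, h2⟩
  simpa [setIntegral_const, smul_eq_mul, mul_comm, Measure.real] using h1

lemma setint_lb (hβ : β = (volume.restrict (Icc a b)).withDensity fun x => ENNReal.ofReal (g x))
    [IsFiniteMeasure β] {f : ℝ → ℝ} {C : ℝ} {s : Set ℝ} (hs : MeasurableSet s)
    (hint : Integrable f β) (hbd : ∀ x ∈ s ∩ Icc a b, C ≤ f x) :
    C * (β s).toReal ≤ ∫ x in s, f x ∂β := by
  have h1 : ∫ _x in s, C ∂β ≤ ∫ x in s, f x ∂β := by
    apply integral_mono_ae (integrable_const C) hint.restrict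
    filter_upwards [ae_restrict_mem hs, ae_restrict_of_ae (ae_Icc hβ)] with x h1 h2
    exact hbd x ⟨h1, h2⟩
  simpa [setIntegral_const, smul_eq_mul, mul_comm, Measure.real] using h1

lemma mass_add [IsFiniteMeasure β] {u m v : ℝ} (hum : u ≤ m) (hmv : m ≤ v) :
    (β (Ico u v)).toReal = (β (Ico u m)).toReal + (β (Ico m v)).toReal := by
  rw [← Ico_union_Ico_eq_Ico hum hmv,
    measure_union (Set.Ico_disjoint_Ico_same) measurableSet_Ico,
    ENNReal.toReal_add (measure_ne_top β _) (measure_ne_top β _)]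

lemma setint_add [IsFiniteMeasure β] {f : ℝ → ℝ} (hint : Integrable f β) {u m v : ℝ}
    (hum : u ≤ m) (hmv : m ≤ v) :
    ∫ x in Ico u v, f x ∂β = (∫ x in Ico u m, f x ∂β) + ∫ x in Ico m v, f x ∂β := by
  rw [← Ico_union_Ico_eq_Ico hum hmv,
    setIntegral_union (Set.Ico_disjoint_Ico_same) measurableSet_Ico
      hint.integrableOn hint.integrableOn]




lemma avg_bounds (hβ : β = (volume.restrict (Icc a b)).withDensity fun x => ENNReal.ofReal (g x))
    [IsFiniteMeasure β] (hdg0 : 0 < dg) (hdg : ∀ x ∈ Icc a b, dg ≤ g x)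
    (hμ_mono : StrictMonoOn μ (Icc a b)) (hμint : Integrable μ β)
    {u v : ℝ} (hu : a ≤ u) (huv : u < v) (hv : v ≤ b) :
    0 < (β (Ico u v)).toReal ∧
      μ u * (β (Ico u v)).toReal < ∫ x in Ico u v, μ x ∂β ∧
      (∫ x in Ico u v, μ x ∂β) < μ v * (β (Ico u v)).toReal := by
  have huI : u ∈ Icc a b := ⟨hu, huv.le.trans hv⟩
  have hvI : v ∈ Icc a b := ⟨hu.trans huv.le, hv⟩
  set m := (u + v) / 2 with hm
  have hum : u < m := by rw [hm]; linarith
  have hmv : m < v := by rw [hm]; linarith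
  have hmI : m ∈ Icc a b := ⟨hu.trans hum.le, hmv.le.trans hv⟩
  have hposL : 0 < (β (Ico u m)).toReal :=
    lt_of_lt_of_le (by nlinarith) (mass_lb hβ hdg hu hum.le (hmv.le.trans hv))
  have hposR : 0 < (β (Ico m v)).toReal :=
    lt_of_lt_of_le (by nlinarith) (mass_lb hβ hdg (hu.trans hum.le) hmv.le hv)
  have hmassadd : (β (Ico u v)).toReal = (β (Ico u m)).toReal + (β (Ico m v)).toReal :=
    mass_add hum.le hmv.le
  have hintadd : ∫ x in Ico u v, μ x ∂β = (∫ x in Ico u m, μ x ∂β) + ∫ x in Ico m v, μ x ∂β :=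
    setint_add hμint hum.le hmv.le
  refine ⟨by linarith, ?_, ?_⟩
  · -- lower
    rw [hmassadd, hintadd]
    have h1 : μ u * (β (Ico u m)).toReal ≤ ∫ x in Ico u m, μ x ∂β := by
      apply setint_lb hβ measurableSet_Ico hμint
      intro x hx
      exact (hμ_mono.monotoneOn huI hx.2 hx.1.1)
    have h2 : μ m * (β (Ico m v)).toReal ≤ ∫ x in Ico m v, μ x ∂β := by
      apply setint_lb hβ measurableSet_Ico hμint
      intro x hx
      exact (hμ_mono.monotoneOn hmI hx.2 hx.1.1)
    have h3 : μ u < μ m := hμ_mono huI hmI hum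
    nlinarith [mul_pos (sub_pos.2 h3) hposR]
  · -- upper
    rw [hmassadd, hintadd]
    have h1 : ∫ x in Ico u m, μ x ∂β ≤ μ m * (β (Ico u m)).toReal := by
      apply setint_ub hβ measurableSet_Ico hμint
      intro x hx
      exact (hμ_mono.monotoneOn hx.2 hmI (hx.1.2.le.trans (le_refl m)))
    have h2 : ∫ x in Ico m v, μ x ∂β ≤ μ v * (β (Ico m v)).toReal := by
      apply setint_ub hβ measurableSet_Ico hμint
      intro x hx
      exact (hμ_mono.monotoneOn hx.2 hvI hx.1.2.le)
    have h3 : μ m < μ v := hμ_mono hmI hvI hmv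
    nlinarith [mul_pos (sub_pos.2 h3) hposL]



lemma bestResponse_eq {c : ℝ → ℝ → ℝ}
    (hc_cont : Continuous fun p : ℝ × ℝ => c p.1 p.2)
    (hc_zero : ∀ x, c x x = 0)
    (hc_between : ∀ x xP z : ℝ, min x xP < z → z < max x xP → c x z < c x xP ∧ c z x < c xP x)
    {θ x : ℝ} (hθ : θ ∈ Icc a b) (hx : x ∈ Icc a b) :
    bestResponse c θ x = if x ∈ Ico (qfun c a θ) θ then θ else x := by
  obtain ⟨hSeq, haq, hqθ, hcq⟩ := q_spec hc_cont hc_zero hc_between hθ.1 (c := c)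
  unfold bestResponse
  by_cases hθx : θ ≤ x
  · rw [if_pos hθx, if_neg (fun h => absurd h.2 (not_lt.2 hθx))]
  · push_neg at hθx
    rw [if_neg (not_le.2 hθx)]
    by_cases hc1 : c x θ ≤ 1
    · have hmem : x ∈ {y | y ∈ Icc a θ ∧ c y θ ≤ 1} := ⟨⟨hx.1, hθx.le⟩, hc1⟩
      rw [hSeq] at hmem
      rw [if_pos hc1, if_pos ⟨hmem.1, hθx⟩]
    · rw [if_neg hc1, if_neg]
      intro hmem
      have : x ∈ {y | y ∈ Icc a θ ∧ c y θ ≤ 1} := by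
        rw [hSeq]; exact ⟨hmem.1, hθx.le⟩
      exact hc1 this.2

lemma aesm_risk (hβ : β = (volume.restrict (Icc a b)).withDensity fun x => ENNReal.ofReal (g x))
    {c : ℝ → ℝ → ℝ}
    (hc_cont : Continuous fun p : ℝ × ℝ => c p.1 p.2)
    (hc_zero : ∀ x, c x x = 0)
    (hc_between : ∀ x xP z : ℝ, min x xP < z → z < max x xP → c x z < c x xP ∧ c z x < c xP x)
    (hμ_cont : ContinuousOn μ (Icc a b)) {θ : ℝ} (hθ : θ ∈ Icc a b) (t : ℝ) :
    AEStronglyMeasurable (fun x => if t ≤ bestResponse c θ x then 1 - μ x else μ x) β := by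
  set ρ : ℝ → ℝ := fun x => if x ∈ Ico (qfun c a θ) θ then θ else x with hρ
  have hρmeas : Measurable ρ := Measurable.ite measurableSet_Ico measurable_const measurable_id
  set E := ρ ⁻¹' (Ici t) with hE
  have hEmeas : MeasurableSet E := hρmeas measurableSet_Ici
  have hμm : AEStronglyMeasurable μ β := aesm_of_contOn hβ hμ_cont
  have h1m : AEStronglyMeasurable (fun x => 1 - μ x) β :=
    aesm_of_contOn hβ (continuousOn_const.sub hμ_cont)
  have hφ : AEStronglyMeasurable
      (fun x => E.indicator (fun y => 1 - μ y) x + Eᶜ.indicator μ x) β :=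
    (h1m.indicator hEmeas).add (hμm.indicator hEmeas.compl)
  apply hφ.congr
  filter_upwards [ae_Icc hβ] with x hx
  have hbr : bestResponse c θ x = ρ x := bestResponse_eq hc_cont hc_zero hc_between hθ hx
  by_cases hxE : x ∈ E
  · have ht' : t ≤ bestResponse c θ x := by rw [hbr]; exact hxE
    rw [indicator_of_mem hxE, indicator_of_notMem (by simp [hxE]), if_pos ht', add_zero]
  · have ht' : ¬ t ≤ bestResponse c θ x := by rw [hbr]; exact hxE
    rw [indicator_of_notMem hxE, indicator_of_mem (by simp [hxE]), if_neg ht', zero_add]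

lemma integrable_risk (hβ : β = (volume.restrict (Icc a b)).withDensity fun x => ENNReal.ofReal (g x))
    [IsFiniteMeasure β] {c : ℝ → ℝ → ℝ}
    (hc_cont : Continuous fun p : ℝ × ℝ => c p.1 p.2)
    (hc_zero : ∀ x, c x x = 0)
    (hc_between : ∀ x xP z : ℝ, min x xP < z → z < max x xP → c x z < c x xP ∧ c z x < c xP x)
    (hμ_cont : ContinuousOn μ (Icc a b)) (hμ_range : ∀ x ∈ Icc a b, μ x ∈ Icc (0:ℝ) 1)
    {θ : ℝ} (hθ : θ ∈ Icc a b) (t : ℝ) :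
    Integrable (fun x => if t ≤ bestResponse c θ x then 1 - μ x else μ x) β := by
  apply integrable_bdd hβ (aesm_risk hβ hc_cont hc_zero hc_between hμ_cont hθ t)
  intro x hx
  obtain ⟨h0, h1⟩ := hμ_range x hx
  by_cases h : t ≤ bestResponse c θ x
  · rw [if_pos h, abs_le]; constructor <;> linarith
  · rw [if_neg h, abs_le]; constructor <;> linarith

lemma smRisk_flat (hβ : β = (volume.restrict (Icc a b)).withDensity fun x => ENNReal.ofReal (g x))
    {c : ℝ → ℝ → ℝ}
    (hc_cont : Continuous fun p : ℝ × ℝ => c p.1 p.2)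
    (hc_zero : ∀ x, c x x = 0)
    (hc_between : ∀ x xP z : ℝ, min x xP < z → z < max x xP → c x z < c x xP ∧ c z x < c xP x)
    {θ t : ℝ} (hθ : θ ∈ Icc a b) (ht : qfun c a θ < t) (htθ : t ≤ θ) :
    smRisk β μ c θ t = smRisk β μ c θ θ := by
  unfold smRisk
  apply integral_congr_ae
  filter_upwards [ae_Icc hβ] with x hx
  have hbr := bestResponse_eq (a := a) hc_cont hc_zero hc_between hθ hx
  rw [hbr]
  by_cases hxI : x ∈ Ico (qfun c a θ) θ
  · rw [if_pos hxI, if_pos htθ, if_pos le_rfl]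
  · rw [if_neg hxI]
    by_cases hθx : θ ≤ x
    · rw [if_pos (htθ.trans hθx), if_pos hθx]
    · push_neg at hθx
      have hxq : x < qfun c a θ := by
        by_contra h
        push_neg at h
        exact hxI ⟨h, hθx⟩
      rw [if_neg (by push_neg; exact hxq.trans ht), if_neg (not_le.2 hθx)]

lemma smRisk_jump (hβ : β = (volume.restrict (Icc a b)).withDensity fun x => ENNReal.ofReal (g x))
    [IsFiniteMeasure β] {c : ℝ → ℝ → ℝ}
    (hc_cont : Continuous fun p : ℝ × ℝ => c p.1 p.2)
    (hc_zero : ∀ x, c x x = 0)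
    (hc_between : ∀ x xP z : ℝ, min x xP < z → z < max x xP → c x z < c x xP ∧ c z x < c xP x)
    (hμ_cont : ContinuousOn μ (Icc a b)) (hμ_range : ∀ x ∈ Icc a b, μ x ∈ Icc (0:ℝ) 1)
    {θ t : ℝ} (hθ : θ ∈ Icc a b) (ht : θ < t) :
    smRisk β μ c θ t = smRisk β μ c θ θ + ∫ x in Ico (qfun c a θ) t, (2 * μ x - 1) ∂β := by
  obtain ⟨hSeq, haq, hqθ, hcq⟩ := q_spec hc_cont hc_zero hc_between hθ.1 (c := c)
  have hint_t := integrable_risk hβ hc_cont hc_zero hc_between hμ_cont hμ_range hθ t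
  have hint_θ := integrable_risk hβ hc_cont hc_zero hc_between hμ_cont hμ_range hθ θ
  have hdiff : ∀ᵐ x ∂β,
      (if t ≤ bestResponse c θ x then 1 - μ x else μ x)
        - (if θ ≤ bestResponse c θ x then 1 - μ x else μ x)
      = (Ico (qfun c a θ) t).indicator (fun y => 2 * μ y - 1) x := by
    filter_upwards [ae_Icc hβ] with x hx
    have hbr := bestResponse_eq (a := a) hc_cont hc_zero hc_between hθ hx
    rw [hbr]
    by_cases hxI : x ∈ Ico (qfun c a θ) θ
    · rw [if_pos hxI, if_neg (not_le.2 ht), if_pos le_rfl,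
        indicator_of_mem (mem_Ico.mpr ⟨hxI.1, hxI.2.trans ht⟩)]
      ring
    · rw [if_neg hxI]
      by_cases hθx : θ ≤ x
      · by_cases htx : t ≤ x
        · rw [if_pos htx, if_pos hθx, indicator_of_notMem (fun h => absurd h.2 (not_lt.2 htx))]
          ring
        · push_neg at htx
          rw [if_neg (not_le.2 htx), if_pos hθx,
            indicator_of_mem (mem_Ico.mpr ⟨hqθ.trans hθx, htx⟩)]
          ring
      · push_neg at hθx
        have hxq : x < qfun c a θ := by
          by_contra h
          push_neg at h
          exact hxI ⟨h, hθx⟩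
        rw [if_neg (by push_neg; exact hθx.trans ht), if_neg (not_le.2 hθx),
          indicator_of_notMem (fun h => absurd h.1 (not_le.2 hxq))]
        ring
  have h1 : smRisk β μ c θ t - smRisk β μ c θ θ
      = ∫ x, (Ico (qfun c a θ) t).indicator (fun y => 2 * μ y - 1) x ∂β := by
    rw [smRisk, smRisk, ← integral_sub hint_t hint_θ]
    exact integral_congr_ae hdiff
  rw [integral_indicator measurableSet_Ico] at h1
  linarith

end meas

set_option maxHeartbeats 2000000 in
/-- Proposition 2(a), case p = 0 (all agents follow standard
microfoundations): the locally stable points form exactly the interval [θ₀, b], where θ₀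
is the unique point of (a,b] with Γ(θ₀) = 1/2; in particular stable points exist. -/
theorem stmt3
    (a b : ℝ) (hab : a < b)
    (c : ℝ → ℝ → ℝ) (hc_cont : Continuous fun p : ℝ × ℝ => c p.1 p.2)
    (hc_zero : ∀ x, c x x = 0)
    (hc_between : ∀ x xP z : ℝ, min x xP < z → z < max x xP →
      c x z < c x xP ∧ c z x < c xP x)
    (g : ℝ → ℝ) (hg_cont : ContinuousOn g (Icc a b)) (hg_pos : ∀ x ∈ Icc a b, 0 < g x)
    (β : Measure ℝ)
    (hβ : β = (volume.restrict (Icc a b)).withDensity fun x => ENNReal.ofReal (g x))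
    (hβprob : IsProbabilityMeasure β)
    (μ : ℝ → ℝ) (hμ_cont : ContinuousOn μ (Icc a b)) (hμ_mono : StrictMonoOn μ (Icc a b))
    (hμ_range : ∀ x ∈ Icc a b, μ x ∈ Icc (0:ℝ) 1)
    (θSL : ℝ) (hθSL : θSL ∈ Ioo a b) (hhalf : μ θSL = 1/2)
    (hexists : ∃ θ ∈ Icc a b, θSL < θ ∧ c θSL θ = 1) :
    ∃ θ₀ ∈ Ioc a b, Gam β μ c a b θ₀ = 1/2 ∧
      (∀ θ₁ ∈ Ioc a b, Gam β μ c a b θ₁ = 1/2 → θ₁ = θ₀) ∧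
      θSL < θ₀ ∧ c θSL θ₀ ≤ 1 ∧
      ∀ θ ∈ Icc a b, (LocallyStable β μ c a b 0 θ ↔ θ₀ ≤ θ) := by
  -- finiteness
  haveI hfin : IsFiniteMeasure β := inferInstance
  obtain ⟨θstar, hθstarI, hθstarSL, hcstar⟩ := hexists
  have haSL : a < θSL := hθSL.1
  have hSLb : θSL < b := hθSL.2
  have hθSLI : θSL ∈ Icc a b := ⟨haSL.le, hSLb.le⟩
  -- global bounds for g
  obtain ⟨xM, hxM, hMgmax⟩ := isCompact_Icc.exists_isMaxOn (nonempty_Icc.2 hab.le) hg_cont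
  set Mg := g xM with hMgdef
  have hMg0 : 0 < Mg := hg_pos xM hxM
  have hMg' : ∀ x ∈ Icc a b, g x ≤ Mg := fun x hx => hMgmax hx
  obtain ⟨xm, hxm, hdgmin⟩ := isCompact_Icc.exists_isMinOn (nonempty_Icc.2 hab.le) hg_cont
  set dg := g xm with hdgdef
  have hdg0 : 0 < dg := hg_pos xm hxm
  have hdg' : ∀ x ∈ Icc a b, dg ≤ g x := fun x hx => hdgmin hx
  -- μ integrable
  have hμm : AEStronglyMeasurable μ β := aesm_of_contOn hβ hμ_cont
  have hμint : Integrable μ β := integrable_bdd hβ hμm (fun x hx => by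
    obtain ⟨h0, h1⟩ := hμ_range x hx; rw [abs_le]; constructor <;> linarith)
  have hWm : AEStronglyMeasurable (fun x => 2 * μ x - 1) β :=
    aesm_of_contOn hβ ((continuousOn_const.mul hμ_cont).sub continuousOn_const)
  have hWint : Integrable (fun x => 2 * μ x - 1) β := integrable_bdd hβ hWm (fun x hx => by
    obtain ⟨h0, h1⟩ := hμ_range x hx; rw [abs_le]; constructor <;> linarith)
  -- q facts
  have hqfacts : ∀ θ ∈ Ioc a b, a ≤ qfun c a θ ∧ qfun c a θ < θ := fun θ hθ =>
    ⟨(q_spec hc_cont hc_zero hc_between hθ.1.le (c := c)).2.1,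
     q_lt hc_cont hc_zero hc_between hθ.1⟩
  have hqmono' : ∀ θ₁ θ₂ : ℝ, a ≤ θ₁ → θ₁ ≤ θ₂ → qfun c a θ₁ ≤ qfun c a θ₂ :=
    fun θ₁ θ₂ h1 h2 => q_mono hc_cont hc_zero hc_between h1 h2
  -- Qset structure
  have hQ : ∀ θ ∈ Ioc a b, Qset c a b θ = Ico (qfun c a θ) θ := by
    intro θ hθ
    obtain ⟨hSeq, haq, hqθ, hcq⟩ := q_spec hc_cont hc_zero hc_between hθ.1.le (c := c)
    ext x
    constructor
    · rintro ⟨hxab, hxθ, hcx⟩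
      have : x ∈ {y | y ∈ Icc a θ ∧ c y θ ≤ 1} := ⟨⟨hxab.1, hxθ.le⟩, hcx⟩
      rw [hSeq] at this
      exact ⟨this.1, hxθ⟩
    · rintro ⟨hqx, hxθ⟩
      have : x ∈ {y | y ∈ Icc a θ ∧ c y θ ≤ 1} := by
        rw [hSeq]; exact ⟨hqx, hxθ.le⟩
      exact ⟨⟨this.1.1, hxθ.le.trans hθ.2⟩, hxθ, this.2⟩
  -- Gam as ratio
  have hGamEq : ∀ θ ∈ Ioc a b, Gam β μ c a b θ
      = (∫ x in Ico (qfun c a θ) θ, μ x ∂β) / (β (Ico (qfun c a θ) θ)).toReal := by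
    intro θ hθ
    rw [Gam, hQ θ hθ]
  -- avg bounds applied to intervals in [a,b]
  have havg : ∀ u v : ℝ, a ≤ u → u < v → v ≤ b →
      0 < (β (Ico u v)).toReal ∧
      μ u * (β (Ico u v)).toReal < ∫ x in Ico u v, μ x ∂β ∧
      (∫ x in Ico u v, μ x ∂β) < μ v * (β (Ico u v)).toReal :=
    fun u v hu huv hv => avg_bounds hβ hdg0 hdg' hμ_mono hμint hu huv hv
  -- strict monotonicity of Gam on Ioc a b
  have hGamMono : ∀ θ₁ ∈ Ioc a b, ∀ θ₂ ∈ Ioc a b, θ₁ < θ₂ →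
      Gam β μ c a b θ₁ < Gam β μ c a b θ₂ := by
    intro θ₁ hθ₁ θ₂ hθ₂ h12
    obtain ⟨hq₁a, hq₁⟩ := hqfacts θ₁ hθ₁
    obtain ⟨hq₂a, hq₂⟩ := hqfacts θ₂ hθ₂
    have hq12 : qfun c a θ₁ ≤ qfun c a θ₂ := hqmono' θ₁ θ₂ hθ₁.1.le h12.le
    rw [hGamEq θ₁ hθ₁, hGamEq θ₂ hθ₂]
    obtain ⟨hm₁, hlb₁, hub₁⟩ := havg (qfun c a θ₁) θ₁ hq₁a hq₁ hθ₁.2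
    obtain ⟨hm₂, hlb₂, hub₂⟩ := havg (qfun c a θ₂) θ₂ hq₂a hq₂ hθ₂.2
    rcases le_or_gt θ₁ (qfun c a θ₂) with hcase | hcase
    · -- disjoint case
      have h1 : (∫ x in Ico (qfun c a θ₁) θ₁, μ x ∂β) / (β (Ico (qfun c a θ₁) θ₁)).toReal < μ θ₁ :=
        (div_lt_iff₀ hm₁).2 (by linarith)
      have h2 : μ (qfun c a θ₂) < (∫ x in Ico (qfun c a θ₂) θ₂, μ x ∂β) / (β (Ico (qfun c a θ₂) θ₂)).toReal :=
        (lt_div_iff₀ hm₂).2 (by linarith)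
      have h3 : μ θ₁ ≤ μ (qfun c a θ₂) :=
        hμ_mono.monotoneOn ⟨hθ₁.1.le, hθ₁.2⟩ ⟨hq₂a, hq₂.le.trans hθ₂.2⟩ hcase
      linarith
    · -- overlapping case
      obtain ⟨hm', hlb', hub'⟩ := havg (qfun c a θ₂) θ₁ hq₂a hcase hθ₁.2
      obtain ⟨hmB, hlbB, hubB⟩ := havg θ₁ θ₂ hθ₁.1.le h12 hθ₂.2
      set N' := ∫ x in Ico (qfun c a θ₂) θ₁, μ x ∂β with hN'
      set m' := (β (Ico (qfun c a θ₂) θ₁)).toReal with hm'def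
      have hkey1 : (∫ x in Ico (qfun c a θ₁) θ₁, μ x ∂β) / (β (Ico (qfun c a θ₁) θ₁)).toReal
          ≤ N' / m' := by
        rcases eq_or_lt_of_le hq12 with heq | hlt
        · rw [heq]
        · obtain ⟨hmA, hlbA, hubA⟩ := havg (qfun c a θ₁) (qfun c a θ₂) hq₁a hlt (hcase.le.trans hθ₁.2)
          set NA := ∫ x in Ico (qfun c a θ₁) (qfun c a θ₂), μ x ∂β with hNA
          set mA := (β (Ico (qfun c a θ₁) (qfun c a θ₂))).toReal with hmA'
          have haddN : ∫ x in Ico (qfun c a θ₁) θ₁, μ x ∂β = NA + N' :=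
            setint_add hμint hlt.le hcase.le
          have haddM : (β (Ico (qfun c a θ₁) θ₁)).toReal = mA + m' :=
            mass_add hlt.le hcase.le
          rw [haddN, haddM, div_le_div_iff₀ (by linarith) hm']
          -- (NA + N') * m' ≤ N' * (mA + m')
          have hx1 : NA * m' ≤ (μ (qfun c a θ₂) * mA) * m' :=
            mul_le_mul_of_nonneg_right hubA.le hm'.le
          have hx2 : (μ (qfun c a θ₂) * m') * mA ≤ N' * mA :=
            mul_le_mul_of_nonneg_right hlb'.le hmA.le
          nlinarith
      have hkey2 : N' / m' < (∫ x in Ico (qfun c a θ₂) θ₂, μ x ∂β) / (β (Ico (qfun c a θ₂) θ₂)).toReal := by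
        set NB := ∫ x in Ico θ₁ θ₂, μ x ∂β with hNB
        set mB := (β (Ico θ₁ θ₂)).toReal with hmB'
        have haddN : ∫ x in Ico (qfun c a θ₂) θ₂, μ x ∂β = N' + NB :=
          setint_add hμint hcase.le h12.le
        have haddM : (β (Ico (qfun c a θ₂) θ₂)).toReal = m' + mB :=
          mass_add hcase.le h12.le
        rw [haddN, haddM, div_lt_div_iff₀ hm' (by linarith)]
        -- N' * (m' + mB) < (N' + NB) * m'
        have hx1 : (μ θ₁ * mB) * m' ≤ NB * m' :=
          mul_le_mul_of_nonneg_right hlbB.le hm'.le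
        have hx2 : N' * mB < (μ θ₁ * m') * mB :=
          mul_lt_mul_of_pos_right hub' hmB
        nlinarith
      exact lt_of_le_of_lt hkey1 hkey2
  -- continuity of Gam on [θSL, θstar]
  have hIccsub : Icc θSL θstar ⊆ Ioc a b := fun x hx =>
    ⟨haSL.trans_le hx.1, hx.2.trans hθstarI.2⟩
  have hGamCont : ContinuousOn (Gam β μ c a b) (Icc θSL θstar) := by
    set NN : ℝ → ℝ := fun t => ∫ x in Ico a t, μ x ∂β with hNN
    set MM : ℝ → ℝ := fun t => (β (Ico a t)).toReal with hMM
    have hlip : ∀ F : ℝ → ℝ, (∀ s t : ℝ, s ∈ Icc a b → t ∈ Icc a b → s ≤ t →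
        |F t - F s| ≤ Mg * (t - s)) → ContinuousOn F (Icc a b) := by
      intro F hF x hx
      rw [Metric.continuousWithinAt_iff]
      intro ε hε
      refine ⟨ε / (Mg + 1), by positivity, ?_⟩
      intro y hy hd
      rw [Real.dist_eq] at hd ⊢
      have hb1 : |F y - F x| ≤ Mg * |y - x| := by
        rcases le_total x y with h | h
        · calc |F y - F x| ≤ Mg * (y - x) := hF x y hx hy h
            _ ≤ Mg * |y - x| := by rw [abs_of_nonneg (by linarith)]
        · calc |F y - F x| = |F x - F y| := abs_sub_comm _ _
            _ ≤ Mg * (x - y) := hF y x hy hx h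
            _ = Mg * |y - x| := by rw [abs_sub_comm, abs_of_nonneg (by linarith)]
      calc |F y - F x| ≤ Mg * |y - x| := hb1
        _ < Mg * (ε / (Mg + 1)) + ε / (Mg + 1) := by nlinarith [abs_nonneg (y - x)]
        _ = ε := by field_simp
    have hNNlip : ∀ s t : ℝ, s ∈ Icc a b → t ∈ Icc a b → s ≤ t → |NN t - NN s| ≤ Mg * (t - s) := by
      intro s t hs ht hst
      have hadd : NN t = NN s + ∫ x in Ico s t, μ x ∂β := setint_add hμint hs.1 hst
      have hub : ∫ x in Ico s t, μ x ∂β ≤ 1 * (β (Ico s t)).toReal :=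
        setint_ub hβ measurableSet_Ico hμint (fun x hx => (hμ_range x hx.2).2)
      have hlb : (-1 : ℝ) * (β (Ico s t)).toReal ≤ ∫ x in Ico s t, μ x ∂β :=
        setint_lb hβ measurableSet_Ico hμint (fun x hx => by linarith [(hμ_range x hx.2).1])
      have hmub : (β (Ico s t)).toReal ≤ Mg * (t - s) := mass_ub hβ hMg0.le hMg' hs.1 hst ht.2
      have hm0 : 0 ≤ (β (Ico s t)).toReal := ENNReal.toReal_nonneg
      rw [hadd, abs_le]
      constructor <;> linarith
    have hMMlip : ∀ s t : ℝ, s ∈ Icc a b → t ∈ Icc a b → s ≤ t → |MM t - MM s| ≤ Mg * (t - s) := by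
      intro s t hs ht hst
      have hadd : MM t = MM s + (β (Ico s t)).toReal := mass_add hs.1 hst
      have hmub : (β (Ico s t)).toReal ≤ Mg * (t - s) := mass_ub hβ hMg0.le hMg' hs.1 hst ht.2
      have hm0 : 0 ≤ (β (Ico s t)).toReal := ENNReal.toReal_nonneg
      rw [hadd, abs_le]
      constructor <;> linarith
    have hNNcont : ContinuousOn NN (Icc a b) := hlip NN hNNlip
    have hMMcont : ContinuousOn MM (Icc a b) := hlip MM hMMlip
    have hqcont : ContinuousOn (qfun c a) (Icc θSL θstar) :=
      (q_cont hc_cont hc_zero hc_between).mono (fun x hx => haSL.trans_le hx.1)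
    have hqmaps : MapsTo (qfun c a) (Icc θSL θstar) (Icc a b) := by
      intro x hx
      obtain ⟨h1, h2⟩ := hqfacts x (hIccsub hx)
      exact ⟨h1, h2.le.trans (hIccsub hx).2⟩
    have hidmaps : MapsTo id (Icc θSL θstar) (Icc a b) := fun x hx =>
      ⟨haSL.le.trans hx.1, hx.2.trans hθstarI.2⟩
    have hcont2 : ContinuousOn (fun θ => (NN θ - NN (qfun c a θ)) / (MM θ - MM (qfun c a θ)))
        (Icc θSL θstar) := by
      apply ContinuousOn.div
      · exact ((hNNcont.comp (continuousOn_id) hidmaps).sub (hNNcont.comp hqcont hqmaps))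
      · exact ((hMMcont.comp (continuousOn_id) hidmaps).sub (hMMcont.comp hqcont hqmaps))
      · intro x hx
        obtain ⟨hqa, hqx⟩ := hqfacts x (hIccsub hx)
        have : MM x = MM (qfun c a x) + (β (Ico (qfun c a x) x)).toReal := mass_add hqa hqx.le
        have hpos : 0 < (β (Ico (qfun c a x) x)).toReal :=
          lt_of_lt_of_le (by nlinarith) (mass_lb hβ hdg' hqa hqx.le (hIccsub hx).2)
        intro hzero
        rw [this] at hzero
        linarith
    apply hcont2.congr
    intro θ hθ
    obtain ⟨hqa, hqθ⟩ := hqfacts θ (hIccsub hθ)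
    have haddN : NN θ = NN (qfun c a θ) + ∫ x in Ico (qfun c a θ) θ, μ x ∂β :=
      setint_add hμint hqa hqθ.le
    have haddM : MM θ = MM (qfun c a θ) + (β (Ico (qfun c a θ) θ)).toReal := mass_add hqa hqθ.le
    simp only
    rw [hGamEq θ (hIccsub hθ), haddN, haddM]
    congr 1 <;> ring
  -- endpoint values
  have hGamSL : Gam β μ c a b θSL < 1/2 := by
    rw [hGamEq θSL ⟨haSL, hSLb.le⟩]
    obtain ⟨hqa, hqθ⟩ := hqfacts θSL ⟨haSL, hSLb.le⟩
    obtain ⟨hm, hlb, hub⟩ := havg (qfun c a θSL) θSL hqa hqθ hSLb.le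
    rw [div_lt_iff₀ hm, ← hhalf]
    linarith
  have hqstar : qfun c a θstar = θSL := by
    obtain ⟨hSeq, haq, hqθ, hcq⟩ := q_spec hc_cont hc_zero hc_between hθstarI.1 (c := c)
    have h1 : qfun c a θstar ≤ θSL :=
      csInf_le ⟨a, fun x hx => hx.1.1⟩ ⟨⟨haSL.le, hθstarSL.le⟩, hcstar.le⟩
    have h2 : θSL ≤ qfun c a θstar := by
      have hne : {x | x ∈ Icc a θstar ∧ c x θstar ≤ 1}.Nonempty :=
        ⟨θstar, ⟨⟨hθstarI.1, le_rfl⟩, by simp [hc_zero]⟩⟩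
      apply le_csInf hne
      intro y hy
      by_contra h
      push_neg at h
      have := (hc_between θstar y θSL (by rw [min_eq_right (h.le.trans hθstarSL.le)]; exact h)
        (by rw [max_eq_left (h.le.trans hθstarSL.le)]; exact hθstarSL)).2
      rw [hcstar] at this
      exact absurd hy.2 (not_le.2 this)
    exact le_antisymm h1 h2
  have hGamStar : 1/2 < Gam β μ c a b θstar := by
    have hstarIoc : θstar ∈ Ioc a b := ⟨haSL.trans hθstarSL, hθstarI.2⟩
    rw [hGamEq θstar hstarIoc, hqstar]
    obtain ⟨hm, hlb, hub⟩ := havg θSL θstar haSL.le hθstarSL hθstarI.2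
    rw [lt_div_iff₀ hm, ← hhalf]
    linarith
  -- IVT
  obtain ⟨θ₀, hθ₀mem, hθ₀Gam⟩ := intermediate_value_Ioo hθstarSL.le hGamCont
    (Set.mem_Ioo.mpr ⟨hGamSL, hGamStar⟩)
  have hθ₀Ioc : θ₀ ∈ Ioc a b := ⟨haSL.trans hθ₀mem.1, hθ₀mem.2.le.trans hθstarI.2⟩
  have hθ₀SL : θSL < θ₀ := hθ₀mem.1
  have hcθ₀ : c θSL θ₀ ≤ 1 := by
    have := (hc_between θSL θstar θ₀ (by rw [min_eq_left hθstarSL.le]; exact hθ₀mem.1)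
      (by rw [max_eq_right hθstarSL.le]; exact hθ₀mem.2)).1
    rw [hcstar] at this
    exact this.le
  have hμθ₀ : 1/2 < μ θ₀ := by
    rw [← hhalf]
    exact hμ_mono hθSLI ⟨hθ₀Ioc.1.le, hθ₀Ioc.2⟩ hθ₀SL
  refine ⟨θ₀, hθ₀Ioc, hθ₀Gam, ?_, hθ₀SL, hcθ₀, ?_⟩
  · -- uniqueness
    intro θ₁ hθ₁ hθ₁Gam
    rcases lt_trichotomy θ₁ θ₀ with h | h | h
    · have hcon := hGamMono θ₁ hθ₁ θ₀ hθ₀Ioc h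
      rw [hθ₁Gam, hθ₀Gam] at hcon
      exact absurd hcon (lt_irrefl _)
    · exact h
    · have hcon := hGamMono θ₀ hθ₀Ioc θ₁ hθ₁ h
      rw [hθ₁Gam, hθ₀Gam] at hcon
      exact absurd hcon (lt_irrefl _)
  · -- stability characterization
    intro θ hθI
    have hmix : ∀ θ' t : ℝ, mixRisk β μ c 0 θ' t = smRisk β μ c θ' t := by
      intro θ' t; simp [mixRisk]
    have hW_eq : ∀ u v : ℝ, ∫ x in Ico u v, (2 * μ x - 1) ∂β
        = 2 * (∫ x in Ico u v, μ x ∂β) - (β (Ico u v)).toReal := by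
      intro u v
      rw [integral_sub ((hμint.const_mul 2).restrict) (integrable_const 1)]
      rw [integral_const_mul, setIntegral_const, smul_eq_mul, mul_one, Measure.real]
    constructor
    · -- locally stable → θ₀ ≤ θ
      intro hLS
      by_contra hcon
      push_neg at hcon
      rcases eq_or_lt_of_le hθI.1 with heq | haθ
      · -- a = a
        subst heq
        have hqa0 : qfun c a a = a := by
          obtain ⟨hSeq, haq, hqa, hcq⟩ := q_spec hc_cont hc_zero hc_between le_rfl (c := c)
          exact le_antisymm hqa haq
        set s₀ := (a + θSL)/2 with hs₀def
        clear_value s₀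
        have has₀ : a < s₀ := by rw [hs₀def]; linarith
        have hs₀SL : s₀ < θSL := by rw [hs₀def]; linarith
        have hs₀I : s₀ ∈ Icc a b := ⟨has₀.le, by linarith⟩
        have hμs₀ : μ s₀ < 1/2 := by
          rw [← hhalf]; exact hμ_mono hs₀I hθSLI hs₀SL
        have hjump0 : ∀ t, a < t → smRisk β μ c a t
            = smRisk β μ c a a + ∫ x in Ico a t, (2 * μ x - 1) ∂β := by
          intro t ht
          have hj := smRisk_jump hβ hc_cont hc_zero hc_between hμ_cont hμ_range
            (left_mem_Icc.mpr hab.le) ht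
          rwa [hqa0] at hj
        have hkey : ∀ t, a < t → t ≤ s₀ →
            smRisk β μ c a t ≤ smRisk β μ c a a + (2 * μ s₀ - 1) * (dg * (t - a)) := by
          intro t ht hts₀
          rw [hjump0 t ht]
          have hub : ∫ x in Ico a t, (2 * μ x - 1) ∂β
              ≤ (2 * μ s₀ - 1) * (β (Ico a t)).toReal := by
            apply setint_ub hβ measurableSet_Ico hWint
            intro x hx
            have : μ x ≤ μ s₀ := hμ_mono.monotoneOn hx.2 hs₀I (hx.1.2.le.trans hts₀)
            linarith
          have hm : dg * (t - a) ≤ (β (Ico a t)).toReal :=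
            mass_lb hβ hdg' le_rfl ht.le (hts₀.trans hs₀I.2)
          have hswap : (2 * μ s₀ - 1) * (β (Ico a t)).toReal
              ≤ (2 * μ s₀ - 1) * (dg * (t - a)) := by
            nlinarith [mul_nonneg (by linarith : (0:ℝ) ≤ 1 - 2 * μ s₀)
              (by linarith : (0:ℝ) ≤ (β (Ico a t)).toReal - dg * (t - a))]
          linarith
        rcases hLS with hLM | hDer
        · -- not a local min
          have hLM' : {t | (fun θ' => mixRisk β μ c 0 a θ') a
              ≤ (fun θ' => mixRisk β μ c 0 a θ') t} ∈ 𝓝[Icc a b] a := hLM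
          rw [Metric.mem_nhdsWithin_iff] at hLM'
          obtain ⟨δ, hδ0, hδ⟩ := hLM'
          set t := a + min (δ/2) (s₀ - a) with htdef
          clear_value t
          have hη0 : 0 < min (δ/2) (s₀ - a) := lt_min (by linarith) (by linarith)
          have hθt : a < t := by rw [htdef]; linarith
          have hts₀ : t ≤ s₀ := by
            have := min_le_right (δ/2) (s₀ - a); rw [htdef]; linarith
          have htball : t ∈ Metric.ball a δ := by
            rw [Metric.mem_ball, Real.dist_eq, abs_of_pos (by linarith : (0:ℝ) < t - a)]
            have := min_le_left (δ/2) (s₀ - a); rw [htdef]; linarith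
          have htI : t ∈ Icc a b := ⟨hθt.le, hts₀.trans hs₀I.2⟩
          have hle := hδ ⟨htball, htI⟩
          simp only [mem_setOf_eq, hmix] at hle
          have hk := hkey t hθt hts₀
          nlinarith [mul_pos hdg0 (by linarith : (0:ℝ) < t - a)]
        · -- derivative cannot be 0
          have hDW := (hDer.hasDerivWithinAt (s := Ioi a))
          rw [hasDerivWithinAt_iff_tendsto_slope] at hDW
          have hset : Ioi a \ {a} = Ioi a := diff_singleton_eq_self (lt_irrefl a)
          rw [hset] at hDW
          have hslope : ∀ᶠ t in 𝓝[>] a,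
              slope (fun θ' => mixRisk β μ c 0 a θ') a t ≤ (2 * μ s₀ - 1) * dg := by
            filter_upwards [Ioc_mem_nhdsGT_of_mem ⟨le_refl a, has₀⟩] with t ht
            rw [slope_def_field]
            simp only [hmix]
            rw [div_le_iff₀ (by linarith [ht.1] : (0:ℝ) < t - a)]
            have hk := hkey t ht.1 ht.2
            nlinarith
          have h0le := le_of_tendsto hDW hslope
          nlinarith [hμs₀, hdg0]
      · -- a < θ < θ₀
        have hθIoc : θ ∈ Ioc a b := ⟨haθ, hθI.2⟩
        have hθb : θ < b := lt_of_lt_of_le hcon hθ₀Ioc.2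
        obtain ⟨hqa, hqθ⟩ := hqfacts θ hθIoc
        have hmasspos := (havg _ _ hqa hqθ hθIoc.2).1
        have hGamθ : Gam β μ c a b θ < 1/2 := by
          rw [← hθ₀Gam]; exact hGamMono θ hθIoc θ₀ hθ₀Ioc hcon
        set D := ∫ x in Ico (qfun c a θ) θ, (2 * μ x - 1) ∂β with hDdef
        clear_value D
        have hDneg : D < 0 := by
          rw [hGamEq θ hθIoc, div_lt_iff₀ hmasspos] at hGamθ
          rw [hDdef, hW_eq]
          linarith
        have hjump : ∀ t, θ < t → smRisk β μ c θ t
            = smRisk β μ c θ θ + D + ∫ x in Ico θ t, (2 * μ x - 1) ∂β := by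
          intro t ht
          rw [smRisk_jump hβ hc_cont hc_zero hc_between hμ_cont hμ_range hθI ht,
            setint_add hWint hqθ.le ht.le, hDdef]
          ring
        have hWub : ∀ t, θ < t → t ≤ b → (∫ x in Ico θ t, (2 * μ x - 1) ∂β) ≤ Mg * (t - θ) := by
          intro t ht htb
          calc ∫ x in Ico θ t, (2 * μ x - 1) ∂β ≤ 1 * (β (Ico θ t)).toReal :=
              setint_ub hβ measurableSet_Ico hWint (fun x hx => by
                linarith [(hμ_range x hx.2).2])
            _ = (β (Ico θ t)).toReal := one_mul _
            _ ≤ Mg * (t - θ) := mass_ub hβ hMg0.le hMg' hθIoc.1.le ht.le htb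
        have hWlb : ∀ t, θ < t → t ≤ b → -(Mg * (t - θ)) ≤ ∫ x in Ico θ t, (2 * μ x - 1) ∂β := by
          intro t ht htb
          have hm := mass_ub hβ hMg0.le hMg' hθIoc.1.le ht.le htb
          have hlb : (-1 : ℝ) * (β (Ico θ t)).toReal ≤ ∫ x in Ico θ t, (2 * μ x - 1) ∂β :=
            setint_lb hβ measurableSet_Ico hWint (fun x hx => by
              linarith [(hμ_range x hx.2).1])
          linarith
        rcases hLS with hLM | hDer
        · -- not a local min
          have hLM' : {t | (fun θ' => mixRisk β μ c 0 θ θ') θ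
              ≤ (fun θ' => mixRisk β μ c 0 θ θ') t} ∈ 𝓝[Icc a b] θ := hLM
          rw [Metric.mem_nhdsWithin_iff] at hLM'
          obtain ⟨δ, hδ0, hδ⟩ := hLM'
          set η := min (δ/2) (min ((b - θ)/2) (-D / (2 * (Mg + 1)))) with hηdef
          have hη0 : 0 < η := by
            apply lt_min (by linarith)
            apply lt_min (by linarith)
            have : (0:ℝ) < -D := by linarith
            positivity
          set t := θ + η with htdef
          clear_value t
          have hθt : θ < t := by rw [htdef]; linarith
          have htb : t ≤ b := by
            have h1 : η ≤ (b - θ)/2 := le_trans (min_le_right _ _) (min_le_left _ _)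
            rw [htdef]; linarith
          have htball : t ∈ Metric.ball θ δ := by
            rw [Metric.mem_ball, Real.dist_eq, abs_of_pos (by linarith : (0:ℝ) < t - θ)]
            have h1 : η ≤ δ/2 := min_le_left _ _
            rw [htdef]; linarith
          have htI : t ∈ Icc a b := ⟨by linarith [hθIoc.1], htb⟩
          have hle := hδ ⟨htball, htI⟩
          simp only [mem_setOf_eq, hmix] at hle
          rw [hjump t hθt] at hle
          have hub := hWub t hθt htb
          have hη3 : η ≤ -D / (2 * (Mg + 1)) := le_trans (min_le_right _ _) (min_le_right _ _)
          have htθη : t - θ = η := by rw [htdef]; ring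
          have hMgη : Mg * (t - θ) ≤ -D/2 := by
            rw [htθη]
            have h1 : Mg * η ≤ Mg * (-D / (2 * (Mg + 1))) :=
              mul_le_mul_of_nonneg_left hη3 hMg0.le
            have h2 : Mg * (-D / (2 * (Mg + 1))) ≤ -D/2 := by
              rw [mul_div_assoc']
              rw [div_le_div_iff₀ (by positivity) (by norm_num)]
              nlinarith
            linarith
          linarith
        · -- derivative cannot be 0 : discontinuity
          have hcont := hDer.continuousAt
          have h1 : Filter.Tendsto (fun θ' => mixRisk β μ c 0 θ θ') (𝓝[>] θ)
              (𝓝 (mixRisk β μ c 0 θ θ)) := hcont.tendsto.mono_left nhdsWithin_le_nhds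
          have hIocmem : Ioc θ b ∈ 𝓝[>] θ := Ioc_mem_nhdsGT_of_mem ⟨le_refl θ, hθb⟩
          have hWto0 : Filter.Tendsto (fun t => ∫ x in Ico θ t, (2 * μ x - 1) ∂β)
              (𝓝[>] θ) (𝓝 0) := by
            apply squeeze_zero_norm'
            · filter_upwards [hIocmem] with t ht
              rw [Real.norm_eq_abs, abs_le]
              exact ⟨hWlb t ht.1 ht.2, hWub t ht.1 ht.2⟩
            · have h3 : Filter.Tendsto (fun t : ℝ => Mg * (t - θ)) (𝓝 θ) (𝓝 (Mg * (θ - θ))) :=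
                (continuous_const.mul (continuous_id.sub continuous_const)).tendsto θ
              simpa using h3.mono_left nhdsWithin_le_nhds
          have h2 : Filter.Tendsto (fun θ' => mixRisk β μ c 0 θ θ') (𝓝[>] θ)
              (𝓝 (mixRisk β μ c 0 θ θ + D)) := by
            have h3 : Filter.Tendsto
                (fun t => mixRisk β μ c 0 θ θ + D + ∫ x in Ico θ t, (2 * μ x - 1) ∂β)
                (𝓝[>] θ) (𝓝 (mixRisk β μ c 0 θ θ + D + 0)) := tendsto_const_nhds.add hWto0
            rw [add_zero] at h3
            apply h3.congr'
            filter_upwards [hIocmem] with t ht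
            rw [hmix, hmix, hjump t ht.1]
          have huniq := tendsto_nhds_unique h1 h2
          linarith
    · -- θ₀ ≤ θ → locally stable
      intro hθ₀θ
      have hθIoc : θ ∈ Ioc a b := ⟨lt_of_lt_of_le hθ₀Ioc.1 hθ₀θ, hθI.2⟩
      obtain ⟨hqa, hqθ⟩ := hqfacts θ hθIoc
      have hmasspos := (havg _ _ hqa hqθ hθIoc.2).1
      have hGamθ : 1/2 ≤ Gam β μ c a b θ := by
        rcases eq_or_lt_of_le hθ₀θ with heq | h
        · rw [← heq, hθ₀Gam]
        · rw [← hθ₀Gam]; exact (hGamMono θ₀ hθ₀Ioc θ hθIoc h).le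
      have hDge : 0 ≤ ∫ x in Ico (qfun c a θ) θ, (2 * μ x - 1) ∂β := by
        rw [hGamEq θ hθIoc, le_div_iff₀ hmasspos] at hGamθ
        rw [hW_eq]
        linarith
      refine Or.inl ?_
      have hball : Metric.ball θ (θ - qfun c a θ) ∈ 𝓝 θ := Metric.ball_mem_nhds θ (by linarith)
      show ∀ᶠ t in 𝓝[Icc a b] θ,
        (fun θ' => mixRisk β μ c 0 θ θ') θ ≤ (fun θ' => mixRisk β μ c 0 θ θ') t
      filter_upwards [mem_nhdsWithin_of_mem_nhds hball, self_mem_nhdsWithin] with t htb htI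
      simp only [hmix]
      rw [Metric.mem_ball, Real.dist_eq, abs_lt] at htb
      rcases le_or_gt t θ with h | h
      · -- flat side
        have hqt : qfun c a θ < t := by linarith [htb.1]
        rw [smRisk_flat hβ hc_cont hc_zero hc_between hθI hqt h]
      · -- jump side
        rw [smRisk_jump hβ hc_cont hc_zero hc_between hμ_cont hμ_range hθI h,
          setint_add hWint hqθ.le h.le]
        have hpos : 0 ≤ ∫ x in Ico θ t, (2 * μ x - 1) ∂β := by
          have := setint_lb hβ measurableSet_Ico hWint (C := 0) (s := Ico θ t) (fun x hx => by
            have h1 : μ θ₀ ≤ μ x := hμ_mono.monotoneOn ⟨hθ₀Ioc.1.le, hθ₀Ioc.2⟩ hx.2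
              (le_trans hθ₀θ hx.1.1)
            linarith)
          simpa using this
        linarith
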